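/- arXiv:1302.1958 — 7 statements merged into one kernel-verified Lean document; each statement's English description precedes it below -/
import Mathlib

section
/- Let a, b be 2×2 complex matrices such that D_ξ(b) ≤ D_ξ(a) for all unit vectors ξ ∈ ℂ², where D_ξ(x) = ‖xξ‖² − |⟨xξ, ξ⟩|². Then there exist scalars θ, τ ∈ ℂ with |θ| ≤ 1 such that b = θa + τ·1. -/
open scoped InnerProductSpace

private lemma quad_core' (A C A' B' C' : ℂ) (hA : A ≠ 0)
    (h : ∀ t : ℂ, ‖A' * t ^ 2 + B' * t + C'‖ ≤ ‖A * t ^ 2 + C‖) :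
    B' = 0 ∧ A * C' = A' * C := by
  by_cases hC : C = 0
  · have hC' : C' = 0 := by
      have h0 := h 0
      simp [hC] at h0
      exact norm_le_zero_iff.mp (by simpa using h0)
    have hB' : B' = 0 := by
      by_contra hB
      have hBpos : 0 < ‖B'‖ := norm_pos_iff.mpr hB
      set M : ℝ := ‖A‖ + ‖A'‖ with hM
      have hMnn : 0 ≤ M := by positivity
      set t : ℝ := ‖B'‖ / (2 * (M + 1)) with ht
      have htpos : 0 < t := by positivity
      have h1 := h (t : ℂ)
      rw [hC', hC] at h1
      have hnt : ‖(t:ℂ)‖ = t := by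
        rw [Complex.norm_real]; exact abs_of_pos htpos
      have e1 : ‖B' * (t:ℂ)‖ ≤ ‖A' * (t:ℂ)^2 + B' * (t:ℂ) + 0‖ + ‖A' * (t:ℂ)^2‖ := by
        calc ‖B' * (t:ℂ)‖
            = ‖(A' * (t:ℂ)^2 + B' * (t:ℂ) + 0) + (-(A' * (t:ℂ)^2))‖ := by congr 1; ring
          _ ≤ ‖A' * (t:ℂ)^2 + B' * (t:ℂ) + 0‖ + ‖-(A' * (t:ℂ)^2)‖ := norm_add_le _ _
          _ = ‖A' * (t:ℂ)^2 + B' * (t:ℂ) + 0‖ + ‖A' * (t:ℂ)^2‖ := by rw [norm_neg]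
      have l1 : ‖B' * (t:ℂ)‖ = ‖B'‖ * t := by rw [norm_mul, hnt]
      have l2 : ‖A' * (t:ℂ)^2‖ = ‖A'‖ * t^2 := by rw [norm_mul, norm_pow, hnt]
      have l3 : ‖A * (t:ℂ)^2 + 0‖ = ‖A‖ * t^2 := by rw [add_zero, norm_mul, norm_pow, hnt]
      rw [l1, l2] at e1
      rw [l3] at h1
      have e2 : ‖B'‖ * t ≤ M * t^2 := by
        calc ‖B'‖ * t ≤ ‖A' * (t:ℂ)^2 + B' * (t:ℂ) + 0‖ + ‖A'‖ * t^2 := e1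
          _ ≤ ‖A‖ * t^2 + ‖A'‖ * t^2 := by linarith
          _ = M * t^2 := by rw [hM]; ring
      have e3 : ‖B'‖ ≤ M * t := by
        have h4 := mul_le_mul_of_nonneg_right e2 (inv_pos.mpr htpos).le
        calc ‖B'‖ = ‖B'‖ * t * t⁻¹ := by field_simp
          _ ≤ M * t^2 * t⁻¹ := h4
          _ = M * t := by field_simp
      rw [ht, mul_div_assoc'] at e3
      have e4 : ‖B'‖ * (2 * (M + 1)) ≤ M * ‖B'‖ := (le_div_iff₀ (by positivity)).mp e3
      nlinarith [mul_nonneg hMnn hBpos.le]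
    exact ⟨hB', by rw [hC, hC']; ring⟩
  · obtain ⟨t₀, ht₀⟩ := IsAlgClosed.exists_pow_nat_eq (-C/A) (n := 2) (by norm_num)
    have hroot : A * t₀ ^ 2 + C = 0 := by
      rw [ht₀]; field_simp; ring
    have ht0ne : t₀ ≠ 0 := by
      intro h0
      rw [h0] at hroot
      simp at hroot
      exact hC hroot
    have z1 : A' * t₀ ^ 2 + B' * t₀ + C' = 0 := by
      have := h t₀
      rw [hroot, norm_zero] at this
      exact norm_le_zero_iff.mp this
    have z2 : A' * t₀ ^ 2 - B' * t₀ + C' = 0 := by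
      have h2 := h (-t₀)
      have e : A * (-t₀) ^ 2 + C = 0 := by rw [neg_pow]; simpa using hroot
      rw [e, norm_zero] at h2
      have h3 := norm_le_zero_iff.mp h2
      linear_combination h3
    have hB' : B' = 0 := by
      have hz : B' * t₀ = 0 := by linear_combination (z1 - z2) / 2
      rcases mul_eq_zero.mp hz with h | h
      · exact h
      · exact absurd h ht0ne
    refine ⟨hB', ?_⟩
    have hC'eq : C' = -A' * t₀ ^ 2 := by linear_combination z1 - t₀ * hB'
    rw [hC'eq]
    linear_combination (-A') * hroot

private lemma quad_main' (A B C A' B' C' : ℂ)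
    (h : ∀ x y : ℂ, ‖A' * x ^ 2 + B' * x * y + C' * y ^ 2‖ ≤ ‖A * x ^ 2 + B * x * y + C * y ^ 2‖) :
    ∃ θ : ℂ, ‖θ‖ ≤ 1 ∧ A' = θ * A ∧ B' = θ * B ∧ C' = θ * C := by
  by_cases hp : A = 0 ∧ B = 0 ∧ C = 0
  · obtain ⟨h1, h2, h3⟩ := hp
    have hA' : A' = 0 := by
      have := h 1 0; simp [h1, h2, h3] at this
      exact norm_le_zero_iff.mp (by simpa using this)
    have hC' : C' = 0 := by
      have := h 0 1; simp [h1, h2, h3] at this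
      exact norm_le_zero_iff.mp (by simpa using this)
    have hB' : B' = 0 := by
      have := h 1 1; simp [h1, h2, h3, hA', hC'] at this
      exact norm_le_zero_iff.mp (by simpa using this)
    exact ⟨0, by norm_num, by simp [hA'], by simp [hB'], by simp [hC']⟩
  · have hex : ∃ t : ℂ, A + B * t + C * t ^ 2 ≠ 0 := by
      by_contra hc
      push_neg at hc
      apply hp
      have e0 := hc 0
      have e1 := hc 1
      have e2 := hc (-1)
      refine ⟨by linear_combination e0, by linear_combination (e1 - e2) / 2, ?_⟩
      linear_combination (e1 + e2) / 2 - e0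
    obtain ⟨t₀, ht₀⟩ := hex
    set A1 : ℂ := A + B * t₀ + C * t₀ ^ 2 with hA1
    set B1 : ℂ := B + 2 * C * t₀ with hB1
    set A1' : ℂ := A' + B' * t₀ + C' * t₀ ^ 2 with hA1'
    set B1' : ℂ := B' + 2 * C' * t₀ with hB1'
    have h1 : ∀ x y : ℂ, ‖A1' * x ^ 2 + B1' * x * y + C' * y ^ 2‖
        ≤ ‖A1 * x ^ 2 + B1 * x * y + C * y ^ 2‖ := by
      intro x y
      have hxy := h x (y + t₀ * x)
      have el : A' * x ^ 2 + B' * x * (y + t₀ * x) + C' * (y + t₀ * x) ^ 2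
          = A1' * x ^ 2 + B1' * x * y + C' * y ^ 2 := by rw [hA1', hB1']; ring
      have er : A * x ^ 2 + B * x * (y + t₀ * x) + C * (y + t₀ * x) ^ 2
          = A1 * x ^ 2 + B1 * x * y + C * y ^ 2 := by rw [hA1, hB1]; ring
      rwa [el, er] at hxy
    set c : ℂ := -B1 / (2 * A1) with hc
    have hBc : 2 * A1 * c + B1 = 0 := by rw [hc]; field_simp; ring
    have h2 : ∀ x y : ℂ, ‖A1' * x ^ 2 + (2 * A1' * c + B1') * x * y + (A1' * c ^ 2 + B1' * c + C') * y ^ 2‖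
        ≤ ‖A1 * x ^ 2 + (A1 * c ^ 2 + B1 * c + C) * y ^ 2‖ := by
      intro x y
      have hxy := h1 (x + c * y) y
      have el : A1' * (x + c * y) ^ 2 + B1' * (x + c * y) * y + C' * y ^ 2
          = A1' * x ^ 2 + (2 * A1' * c + B1') * x * y + (A1' * c ^ 2 + B1' * c + C') * y ^ 2 := by ring
      have er : A1 * (x + c * y) ^ 2 + B1 * (x + c * y) * y + C * y ^ 2
          = A1 * x ^ 2 + (2 * A1 * c + B1) * x * y + (A1 * c ^ 2 + B1 * c + C) * y ^ 2 := by ring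
      rw [el, er, hBc] at hxy
      calc ‖A1' * x ^ 2 + (2 * A1' * c + B1') * x * y + (A1' * c ^ 2 + B1' * c + C') * y ^ 2‖
          ≤ ‖A1 * x ^ 2 + 0 * x * y + (A1 * c ^ 2 + B1 * c + C) * y ^ 2‖ := hxy
        _ = ‖A1 * x ^ 2 + (A1 * c ^ 2 + B1 * c + C) * y ^ 2‖ := by rw [zero_mul, zero_mul, add_zero]
    have hAA : ‖A1'‖ ≤ ‖A1‖ := by
      have := h2 1 0
      simpa using this
    obtain ⟨hB2, hC2r⟩ := quad_core' A1 (A1 * c ^ 2 + B1 * c + C) A1' (2 * A1' * c + B1')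
      (A1' * c ^ 2 + B1' * c + C') ht₀
      (fun t => by have := h2 t 1; simpa using this)
    set θ : ℂ := A1' / A1 with hθ
    have hθ1 : ‖θ‖ ≤ 1 := by
      rw [hθ, norm_div]
      exact div_le_one_of_le₀ hAA (norm_nonneg _)
    have eA1 : A1' = θ * A1 := by rw [hθ]; field_simp
    have hAB : A1 * B1' = A1' * B1 := by linear_combination A1 * hB2 - A1' * hBc
    have eB1 : B1' = θ * B1 := by
      rw [hθ, div_mul_eq_mul_div, eq_div_iff ht₀]
      linear_combination hAB
    have hAC : A1 * C' = A1' * C := by linear_combination hC2r - c * hAB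
    have eC' : C' = θ * C := by
      rw [hθ, div_mul_eq_mul_div, eq_div_iff ht₀]
      linear_combination hAC
    have eB' : B' = θ * B := by
      linear_combination (-1 : ℂ) * hB1' + eB1 + θ * hB1 + (-2 * t₀) * eC'
    have eA' : A' = θ * A := by
      linear_combination (-1 : ℂ) * hA1' + eA1 + θ * hA1 + (-t₀) * eB' + (-t₀^2) * eC'
    exact ⟨θ, hθ1, eA', eB', eC'⟩

private lemma quad_homog' (A B C A' B' C' : ℂ)
    (h : ∀ x y : ℂ, Complex.normSq x + Complex.normSq y = 1 →
      ‖A' * x ^ 2 + B' * x * y + C' * y ^ 2‖ ≤ ‖A * x ^ 2 + B * x * y + C * y ^ 2‖) :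
    ∀ x y : ℂ, ‖A' * x ^ 2 + B' * x * y + C' * y ^ 2‖ ≤ ‖A * x ^ 2 + B * x * y + C * y ^ 2‖ := by
  intro x y
  by_cases h0 : x = 0 ∧ y = 0
  · simp [h0.1, h0.2]
  · have hs : 0 < Complex.normSq x + Complex.normSq y := by
      rcases (not_and_or.mp h0) with hx | hy
      · have h1 : 0 < Complex.normSq x := Complex.normSq_pos.mpr hx
        have h2 := Complex.normSq_nonneg y
        linarith
      · have h1 : 0 < Complex.normSq y := Complex.normSq_pos.mpr hy
        have h2 := Complex.normSq_nonneg x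
        linarith
    set r : ℝ := Real.sqrt (Complex.normSq x + Complex.normSq y) with hr
    have hrpos : 0 < r := Real.sqrt_pos.mpr hs
    have hr2 : r ^ 2 = Complex.normSq x + Complex.normSq y := Real.sq_sqrt hs.le
    have hrc : (r : ℂ) ≠ 0 := by exact_mod_cast hrpos.ne'
    have hunit : Complex.normSq (x / r) + Complex.normSq (y / r) = 1 := by
      rw [Complex.normSq_div, Complex.normSq_div]
      rw [← add_div]
      have hnr : Complex.normSq (r : ℂ) = r ^ 2 := by
        rw [Complex.normSq_ofReal]; ring
      rw [hnr, hr2]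
      field_simp
    have key := h (x / r) (y / r) hunit
    have el : A' * (x / r) ^ 2 + B' * (x / r) * (y / r) + C' * (y / r) ^ 2
        = (A' * x ^ 2 + B' * x * y + C' * y ^ 2) / (r : ℂ) ^ 2 := by
      field_simp
    have er : A * (x / r) ^ 2 + B * (x / r) * (y / r) + C * (y / r) ^ 2
        = (A * x ^ 2 + B * x * y + C * y ^ 2) / (r : ℂ) ^ 2 := by
      field_simp
    rw [el, er, norm_div, norm_div] at key
    have hnr : 0 < ‖(r : ℂ) ^ 2‖ := norm_pos_iff.mpr (pow_ne_zero _ hrc)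
    exact (div_le_div_iff_of_pos_right hnr).mp key

noncomputable def ee0 : EuclideanSpace ℂ (Fin 2) := EuclideanSpace.single 0 1
noncomputable def ee1 : EuclideanSpace ℂ (Fin 2) := EuclideanSpace.single 1 1

private lemma eapply0 (x y : ℂ) : (x • ee0 + y • ee1) 0 = x := by
  simp [ee0, ee1, EuclideanSpace.single_apply]

private lemma eapply1 (x y : ℂ) : (x • ee0 + y • ee1) 1 = y := by
  simp [ee0, ee1, EuclideanSpace.single_apply]

private lemma edecomp (ξ : EuclideanSpace ℂ (Fin 2)) : ξ = ξ 0 • ee0 + ξ 1 • ee1 := by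
  ext i
  fin_cases i <;> simp [ee0, ee1, EuclideanSpace.single_apply]

private lemma enormsq (ξ : EuclideanSpace ℂ (Fin 2)) :
    ‖ξ‖ ^ 2 = Complex.normSq (ξ 0) + Complex.normSq (ξ 1) := by
  rw [EuclideanSpace.norm_eq, Real.sq_sqrt (by positivity)]
  rw [Fin.sum_univ_two]
  rw [← Complex.sq_norm, ← Complex.sq_norm]

private lemma einner (w ξ : EuclideanSpace ℂ (Fin 2)) :
    ⟪w, ξ⟫_ℂ = starRingEnd ℂ (w 0) * ξ 0 + starRingEnd ℂ (w 1) * ξ 1 := by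
  simp [PiLp.inner_apply, RCLike.inner_apply, Fin.sum_univ_two]
  ring

private lemma variance_eq' (x y w0 w1 : ℂ) (hxy : Complex.normSq x + Complex.normSq y = 1) :
    (Complex.normSq w0 + Complex.normSq w1)
      - Complex.normSq (starRingEnd ℂ w0 * x + starRingEnd ℂ w1 * y)
    = Complex.normSq (x * w1 - y * w0) := by
  have hc : x * starRingEnd ℂ x + y * starRingEnd ℂ y = 1 := by
    rw [Complex.mul_conj, Complex.mul_conj]
    exact_mod_cast congrArg (fun t : ℝ => (t : ℂ)) hxy
  apply Complex.ofReal_injective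
  push_cast [← Complex.mul_conj]
  simp only [map_add, map_mul, map_sub, Complex.conj_conj]
  linear_combination (-(w0 * starRingEnd ℂ w0 + w1 * starRingEnd ℂ w1)) * hc

private lemma Dcalc (T : EuclideanSpace ℂ (Fin 2) →L[ℂ] EuclideanSpace ℂ (Fin 2))
    (x y : ℂ) (hxy : Complex.normSq x + Complex.normSq y = 1) :
    ‖T (x • ee0 + y • ee1)‖ ^ 2 - ‖(⟪T (x • ee0 + y • ee1), x • ee0 + y • ee1⟫_ℂ)‖ ^ 2
    = ‖(T ee0 1) * x ^ 2 + ((T ee1 1) - (T ee0 0)) * x * y + (-(T ee1 0)) * y ^ 2‖ ^ 2 := by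
  have hsq : ∀ z : ℂ, ‖z‖ ^ 2 = Complex.normSq z := fun z => by
    rw [Complex.sq_norm]
  have hTξ : T (x • ee0 + y • ee1) = x • T ee0 + y • T ee1 := by
    rw [map_add, map_smul, map_smul]
  have hw0 : (T (x • ee0 + y • ee1)) 0 = x * (T ee0 0) + y * (T ee1 0) := by
    rw [hTξ]; simp [smul_eq_mul]
  have hw1 : (T (x • ee0 + y • ee1)) 1 = x * (T ee0 1) + y * (T ee1 1) := by
    rw [hTξ]; simp [smul_eq_mul]
  rw [enormsq (T (x • ee0 + y • ee1)), einner, hw0, hw1, eapply0, eapply1, hsq, hsq,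
    variance_eq' x y _ _ hxy]
  congr 1
  ring

/-- If `D_ξ(b) ≤ D_ξ(a)` for all unit vectors of `ℂ²`, then `b = θa + τ·1`
with `|θ| ≤ 1`. -/
theorem stmt_4
    (a b : EuclideanSpace ℂ (Fin 2) →L[ℂ] EuclideanSpace ℂ (Fin 2))
    (h : ∀ ξ : EuclideanSpace ℂ (Fin 2), ‖ξ‖ = 1 →
      ‖b ξ‖ ^ 2 - ‖(⟪b ξ, ξ⟫_ℂ)‖ ^ 2 ≤ ‖a ξ‖ ^ 2 - ‖(⟪a ξ, ξ⟫_ℂ)‖ ^ 2) :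
    ∃ θ τ : ℂ, ‖θ‖ ≤ 1 ∧ b = θ • a + τ • (1 : EuclideanSpace ℂ (Fin 2) →L[ℂ] EuclideanSpace ℂ (Fin 2)) := by
  have hq : ∀ x y : ℂ, Complex.normSq x + Complex.normSq y = 1 →
      ‖(b ee0 1) * x ^ 2 + ((b ee1 1) - (b ee0 0)) * x * y + (-(b ee1 0)) * y ^ 2‖
      ≤ ‖(a ee0 1) * x ^ 2 + ((a ee1 1) - (a ee0 0)) * x * y + (-(a ee1 0)) * y ^ 2‖ := by
    intro x y hxy
    have hnorm : ‖x • ee0 + y • ee1‖ = 1 := by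
      have h1 : ‖x • ee0 + y • ee1‖ ^ 2 = 1 := by
        rw [enormsq, eapply0, eapply1, hxy]
      rw [← Real.sqrt_sq (norm_nonneg (x • ee0 + y • ee1)), h1, Real.sqrt_one]
    have hb := h (x • ee0 + y • ee1) hnorm
    rw [Dcalc a x y hxy, Dcalc b x y hxy] at hb
    exact le_of_pow_le_pow_left₀ two_ne_zero (norm_nonneg _) hb
  obtain ⟨θ, hθ1, eA, eB, eC⟩ := quad_main' (a ee0 1) ((a ee1 1) - (a ee0 0)) (-(a ee1 0))
    (b ee0 1) ((b ee1 1) - (b ee0 0)) (-(b ee1 0))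
    (quad_homog' _ _ _ _ _ _ hq)
  set τ : ℂ := b ee0 0 - θ * a ee0 0 with hτ
  refine ⟨θ, τ, hθ1, ?_⟩
  ext1 ξ
  have hd := edecomp ξ
  rw [hd]
  rw [map_add, map_smul, map_smul, map_add, map_smul, map_smul]
  have e00 : ee0 0 = 1 := by simp [ee0, EuclideanSpace.single_apply]
  have e01 : ee0 1 = 0 := by simp [ee0, EuclideanSpace.single_apply]
  have e10 : ee1 0 = 0 := by simp [ee1, EuclideanSpace.single_apply]
  have e11 : ee1 1 = 1 := by simp [ee1, EuclideanSpace.single_apply]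
  have he0 : b ee0 = (θ • a + τ • (1 : EuclideanSpace ℂ (Fin 2) →L[ℂ] EuclideanSpace ℂ (Fin 2))) ee0 := by
    ext i
    fin_cases i
    · simp [smul_eq_mul, e00]
      rw [hτ]; ring
    · simp [smul_eq_mul, e01]
      linear_combination eA
  have he1 : b ee1 = (θ • a + τ • (1 : EuclideanSpace ℂ (Fin 2) →L[ℂ] EuclideanSpace ℂ (Fin 2))) ee1 := by
    ext i
    fin_cases i
    · simp [smul_eq_mul, e10]
      linear_combination -eC
    · simp [smul_eq_mul, e11]
      linear_combination eB
  rw [he0, he1]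
end

section
/- Let a be a normal bounded operator on a complex Hilbert space H and f : σ(a) → ℂ a function satisfying |f(μ) − f(λ)| ≤ κ|μ − λ| for all λ, μ ∈ σ(a) and some constant κ > 0. Then b = f(a) (defined by continuous functional calculus) satisfies D_ξ(b) ≤ κ² D_ξ(a) for all unit vectors ξ ∈ H. -/
open scoped InnerProductSpace

section Helpers
variable {H : Type*} [NormedAddCommGroup H] [InnerProductSpace ℂ H]
    [CompleteSpace H] (a : H →L[ℂ] H)

theorem cfc_inner_nonneg' (u : ℂ → ℝ) (hu : ContinuousOn u (spectrum ℂ a))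
    (hu0 : ∀ z ∈ spectrum ℂ a, 0 ≤ u z) (ξ : H) :
    0 ≤ (⟪ξ, (cfc (fun z => (u z : ℂ)) a) ξ⟫_ℂ).re := by
  set s : ℂ → ℂ := fun z => ((Real.sqrt (u z) : ℝ) : ℂ) with hs
  have hsc : ContinuousOn s (spectrum ℂ a) :=
    Complex.continuous_ofReal.comp_continuousOn (Real.continuous_sqrt.comp_continuousOn hu)
  have h1 : cfc (fun z => (u z : ℂ)) a = cfc (fun z => star (s z) * s z) a := by
    apply cfc_congr
    intro z hz
    simp only [s, Complex.star_def, Complex.conj_ofReal, ← Complex.ofReal_mul,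
      Real.mul_self_sqrt (hu0 z hz)]
  have hstar : ContinuousOn (fun z => star (s z)) (spectrum ℂ a) := by fun_prop
  rw [h1, cfc_mul _ _ a hstar hsc, cfc_star s a, ContinuousLinearMap.mul_apply,
    ContinuousLinearMap.star_eq_adjoint, ContinuousLinearMap.adjoint_inner_right]
  exact inner_self_nonneg (𝕜 := ℂ) (x := cfc s a ξ)

end Helpers

/-- If `a` is normal and `f` is `κ`-Lipschitz on `σ(a)`, then `b = f(a)`
satisfies `D_ξ(b) ≤ κ² D_ξ(a)` for all unit vectors `ξ`. -/
theorem stmt_8 {H : Type*} [NormedAddCommGroup H] [InnerProductSpace ℂ H]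
    [CompleteSpace H] (a : H →L[ℂ] H) [IsStarNormal a]
    (f : ℂ → ℂ) (κ : ℝ) (hκ : 0 < κ)
    (hf : ∀ lam ∈ spectrum ℂ a, ∀ mu ∈ spectrum ℂ a,
      ‖f mu - f lam‖ ≤ κ * ‖mu - lam‖) :
    ∀ ξ : H, ‖ξ‖ = 1 →
      ‖(cfc f a) ξ‖ ^ 2 - ‖(⟪(cfc f a) ξ, ξ⟫_ℂ)‖ ^ 2
        ≤ κ ^ 2 * (‖a ξ‖ ^ 2 - ‖(⟪a ξ, ξ⟫_ℂ)‖ ^ 2) := by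
  intro ξ hξ
  set S := spectrum ℂ a with hS
  have hfc : ContinuousOn f S := by
    have : LipschitzOnWith (Real.toNNReal κ) f S := by
      rw [lipschitzOnWith_iff_dist_le_mul]
      intro x hx y hy
      rw [dist_eq_norm, dist_eq_norm]
      simpa [Real.coe_toNNReal _ hκ.le] using hf y hy x hx
    exact this.continuousOn
  set b := cfc f a with hb
  set α := (⟪a ξ, ξ⟫_ℂ) with hα
  set β := (⟪b ξ, ξ⟫_ℂ) with hβ
  set ψ : ℂ → ℝ := fun μ =>
    κ ^ 2 * ‖a ξ - μ • ξ‖ ^ 2 - ‖b ξ - f μ • ξ‖ ^ 2 with hψ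
  -- Step A: ψ ≥ 0 on the spectrum
  have key : ∀ μ : ℂ, μ ∈ S → ∀ u : ℂ → ℝ,
      (∀ lam : ℂ, ((u lam : ℝ) : ℂ) =
        (κ^2 : ℂ) * (star (lam - μ) * (lam - μ)) - star (f lam - f μ) * (f lam - f μ)) →
      (⟪ξ, (cfc (fun z => (u z : ℂ)) a) ξ⟫_ℂ).re = ψ μ := by
    intro μ hμ u hu
    have hA0 : cfc (fun lam : ℂ => lam - μ) a = a - algebraMap ℂ (H →L[ℂ] H) μ := by
      rw [cfc_sub _ _ a (by fun_prop) (by fun_prop), cfc_id' ℂ a, cfc_const μ a]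
    have hB0 : cfc (fun lam : ℂ => f lam - f μ) a = b - algebraMap ℂ (H →L[ℂ] H) (f μ) := by
      rw [cfc_sub _ _ a hfc (by fun_prop), cfc_const (f μ) a, hb]
    have e0 : (fun z => ((u z : ℝ) : ℂ)) =
        fun lam => (κ^2 : ℂ) * (star (lam - μ) * (lam - μ))
          - star (f lam - f μ) * (f lam - f μ) := funext hu
    rw [e0, cfc_sub _ _ a (by fun_prop) (by fun_prop),
      cfc_const_mul _ _ a (by fun_prop),
      cfc_mul _ _ a (by fun_prop) (by fun_prop),
      cfc_mul _ _ a (by fun_prop) (by fun_prop),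
      cfc_star _ a, cfc_star _ a, hA0, hB0]
    simp only [ContinuousLinearMap.sub_apply, ContinuousLinearMap.smul_apply,
      ContinuousLinearMap.mul_apply, inner_sub_right, inner_smul_right,
      ContinuousLinearMap.star_eq_adjoint, ContinuousLinearMap.adjoint_inner_right,
      inner_self_eq_norm_sq_to_K]
    simp only [Algebra.algebraMap_eq_smul_one, ContinuousLinearMap.smul_apply,
      ContinuousLinearMap.one_apply, hψ]
    simp only [Complex.real_smul, mul_one, ← Complex.ofReal_pow, ← Complex.ofReal_mul,
      ← Complex.ofReal_sub, Complex.ofReal_re]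
  have stepA : ∀ μ ∈ S, 0 ≤ ψ μ := by
    intro μ hμ
    set u : ℂ → ℝ := fun lam => κ^2 * ‖lam - μ‖^2 - ‖f lam - f μ‖^2 with hu
    have hu0 : ∀ lam ∈ S, 0 ≤ u lam := by
      intro lam hlam
      have h1 : ‖f lam - f μ‖ ≤ κ * ‖lam - μ‖ := hf μ hμ lam hlam
      have h2 : (0:ℝ) ≤ ‖f lam - f μ‖ := norm_nonneg _
      show 0 ≤ κ^2 * ‖lam - μ‖^2 - ‖f lam - f μ‖^2
      nlinarith [norm_nonneg (lam - μ), hκ.le]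
    have hucont : ContinuousOn u S := by
      apply ContinuousOn.sub
      · exact continuousOn_const.mul (((continuousOn_id.sub continuousOn_const)).norm.pow 2)
      · exact ((hfc.sub continuousOn_const).norm.pow 2)
    have hcoe : ∀ lam : ℂ, ((u lam : ℝ) : ℂ) =
        (κ^2 : ℂ) * (star (lam - μ) * (lam - μ)) - star (f lam - f μ) * (f lam - f μ) := by
      intro lam
      simp only [u, Complex.star_def, Complex.conj_mul']
      push_cast
      ring
    have := cfc_inner_nonneg' a u hucont hu0 ξ
    rwa [key μ hμ u hcoe] at this
  -- Step B: ψ continuous on S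
  have stepB : ContinuousOn ψ S := by
    apply ContinuousOn.sub
    · apply ContinuousOn.mul continuousOn_const
      exact (((continuousOn_const.sub ((continuousOn_id).smul continuousOn_const))).norm.pow 2)
    · exact ((continuousOn_const.sub (hfc.smul continuousOn_const)).norm.pow 2)
  -- Step C: positivity of the state applied to cfc ψ
  have stepC : 0 ≤ (⟪ξ, (cfc (fun z => (ψ z : ℂ)) a) ξ⟫_ℂ).re :=
    cfc_inner_nonneg' a ψ stepB stepA ξ
  -- Step D : computing the value
  have stepD : (⟪ξ, (cfc (fun z => (ψ z : ℂ)) a) ξ⟫_ℂ).re =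
      2 * (κ ^ 2 * (‖a ξ‖ ^ 2 - ‖α‖ ^ 2) - (‖b ξ‖ ^ 2 - ‖β‖ ^ 2)) := by
    set C0 : ℂ := ((κ ^ 2 * ‖a ξ‖ ^ 2 - ‖b ξ‖ ^ 2 : ℝ) : ℂ) with hC0
    have hcoe : (fun z => ((ψ z : ℝ) : ℂ)) = fun μ =>
        C0 - ((κ ^ 2 : ℂ) * α) * μ - ((κ ^ 2 : ℂ) * star α) * star μ
          + (κ ^ 2 : ℂ) * (star μ * μ)
          + β * f μ + star β * star (f μ) - star (f μ) * f μ := by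
      funext μ
      have h1 : ψ μ = κ ^ 2 * (‖a ξ‖ ^ 2 - 2 * (μ * α).re + ‖μ‖ ^ 2)
          - (‖b ξ‖ ^ 2 - 2 * (f μ * β).re + ‖f μ‖ ^ 2) := by
        show κ ^ 2 * ‖a ξ - μ • ξ‖ ^ 2 - ‖b ξ - f μ • ξ‖ ^ 2 = _
        rw [@norm_sub_sq ℂ, @norm_sub_sq ℂ, inner_smul_right, inner_smul_right,
          norm_smul, norm_smul, hξ, ← hα, ← hβ]
        simp [mul_pow]
      have e2re : ∀ z : ℂ, ((2 * z.re : ℝ) : ℂ) = z + star z := fun z => by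
        rw [Complex.star_def, Complex.add_conj]
      have enorm : ∀ z : ℂ, ((‖z‖ ^ 2 : ℝ) : ℂ) = star z * z := fun z => by
        rw [Complex.star_def, Complex.conj_mul']; push_cast; ring
      have edivre : ∀ z : ℂ, ((z.re : ℝ) : ℂ) = (z + star z) / 2 := fun z => by
        rw [Complex.star_def, Complex.add_conj]; push_cast; ring
      have enorm' : ∀ z : ℂ, ((‖z‖ : ℝ) : ℂ) ^ 2 = star z * z := fun z => by
        rw [Complex.star_def, Complex.conj_mul']
      rw [h1, hC0]
      push_cast
      simp only [edivre, enorm', star_mul']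
      ring
    rw [hcoe]
    rw [cfc_sub _ _ a (by fun_prop) (by fun_prop)]
    rw [cfc_add a _ _ (by fun_prop) (by fun_prop)]
    rw [cfc_add a _ _ (by fun_prop) (by fun_prop)]
    rw [cfc_add a _ _ (by fun_prop) (by fun_prop)]
    rw [cfc_sub _ _ a (by fun_prop) (by fun_prop)]
    rw [cfc_sub _ _ a (by fun_prop) (by fun_prop)]
    rw [cfc_const C0 a]
    rw [cfc_const_mul _ _ a (by fun_prop)]
    rw [cfc_const_mul _ _ a (by fun_prop)]
    rw [cfc_const_mul _ _ a (by fun_prop)]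
    rw [cfc_const_mul _ _ a hfc]
    rw [cfc_const_mul _ _ a (by fun_prop)]
    rw [cfc_mul _ _ a (by fun_prop) (by fun_prop)]
    rw [cfc_mul _ _ a (by fun_prop) hfc]
    rw [cfc_star f a, cfc_star (fun z : ℂ => z) a, cfc_id' ℂ a, ← hb]
    simp only [ContinuousLinearMap.add_apply, ContinuousLinearMap.sub_apply,
      ContinuousLinearMap.smul_apply, ContinuousLinearMap.mul_apply,
      inner_add_right, inner_sub_right, inner_smul_right,
      ContinuousLinearMap.star_eq_adjoint, ContinuousLinearMap.adjoint_inner_right]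
    have hinner1 : ⟪ξ, ξ⟫_ℂ = 1 := by
      rw [inner_self_eq_norm_sq_to_K, hξ]; norm_num
    have hinner2 : ⟪ξ, a ξ⟫_ℂ = star α := by
      rw [← inner_conj_symm, ← hα, Complex.star_def]
    have hinner3 : ⟪ξ, b ξ⟫_ℂ = star β := by
      rw [← inner_conj_symm, ← hβ, Complex.star_def]
    have hinner4 : ⟪a ξ, a ξ⟫_ℂ = ((‖a ξ‖ ^ 2 : ℝ) : ℂ) := by
      rw [inner_self_eq_norm_sq_to_K]; push_cast; rfl
    have hinner5 : ⟪b ξ, b ξ⟫_ℂ = ((‖b ξ‖ ^ 2 : ℝ) : ℂ) := by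
      rw [inner_self_eq_norm_sq_to_K]; push_cast; rfl
    have halgebra : ((algebraMap ℂ (H →L[ℂ] H)) C0) ξ = C0 • ξ := by
      simp [Algebra.algebraMap_eq_smul_one]
    rw [halgebra, inner_smul_right, hinner1, hinner2, hinner3, hinner4, hinner5, ← hα, ← hβ]
    have hnα : α * star α = ((‖α‖ ^ 2 : ℝ) : ℂ) := by
      rw [Complex.star_def, Complex.mul_conj']; push_cast; ring
    have hnβ : β * star β = ((‖β‖ ^ 2 : ℝ) : ℂ) := by
      rw [Complex.star_def, Complex.mul_conj']; push_cast; ring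
    have : (C0 * 1 - (κ ^ 2 : ℂ) * α * star α - (κ ^ 2 : ℂ) * star α * α
        + (κ ^ 2 : ℂ) * ((‖a ξ‖ ^ 2 : ℝ) : ℂ) + β * star β + star β * β
        - ((‖b ξ‖ ^ 2 : ℝ) : ℂ) : ℂ) =
        ((2 * (κ ^ 2 * (‖a ξ‖ ^ 2 - ‖α‖ ^ 2) - (‖b ξ‖ ^ 2 - ‖β‖ ^ 2)) : ℝ) : ℂ) := by
      have hnα' : star α * α = ((‖α‖ ^ 2 : ℝ) : ℂ) := by rw [mul_comm]; exact hnα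
      have hnβ' : star β * β = ((‖β‖ ^ 2 : ℝ) : ℂ) := by rw [mul_comm]; exact hnβ
      rw [hC0, mul_one]
      simp only [mul_assoc, hnα, hnβ, hnα', hnβ']
      push_cast
      ring
    rw [this, Complex.ofReal_re]
  rw [stepD] at stepC
  linarith
end

section
/- Let S, T : X → Y be bounded linear operators between Banach spaces. The range inclusion T*(Y*) ⊆ S*(Y*) of the adjoint maps holds if and only if there exists a constant κ > 0 such that ‖Tξ‖ ≤ κ‖Sξ‖ for all ξ ∈ X. -/
open NormedSpace

set_option maxHeartbeats 1000000 in
/-- For bounded operators `S, T : X → Y` between Banach spaces, the range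
inclusion `T*(Y*) ⊆ S*(Y*)` holds iff `‖Tξ‖ ≤ κ‖Sξ‖` for some `κ > 0` and
all `ξ ∈ X`. -/
theorem stmt_9 {X Y : Type*}
    [NormedAddCommGroup X] [NormedSpace ℂ X] [CompleteSpace X]
    [NormedAddCommGroup Y] [NormedSpace ℂ Y] [CompleteSpace Y]
    (S T : X →L[ℂ] Y) :
    (∀ g : Y →L[ℂ] ℂ, ∃ h : Y →L[ℂ] ℂ, g.comp T = h.comp S)
      ↔ ∃ κ : ℝ, 0 < κ ∧ ∀ ξ : X, ‖T ξ‖ ≤ κ * ‖S ξ‖ := by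
  constructor
  · intro H
    -- Banach–Steinhaus on the family of evaluations at `T ξ`, `‖S ξ‖ ≤ 1`
    set ι := {ξ : X // ‖S ξ‖ ≤ 1}
    have hbdd : ∀ φ : Y →L[ℂ] ℂ, ∃ C, ∀ i : ι,
        ‖(inclusionInDoubleDual ℂ Y (T i.1)) φ‖ ≤ C := by
      intro φ
      obtain ⟨h, hh⟩ := H φ
      refine ⟨‖h‖, fun i => ?_⟩
      have heq : φ (T i.1) = h (S i.1) := congrFun (congrArg DFunLike.coe hh) i.1
      rw [dual_def, heq]
      calc ‖h (S i.1)‖ ≤ ‖h‖ * ‖S i.1‖ := h.le_opNorm _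
        _ ≤ ‖h‖ * 1 := by
            have := i.2
            gcongr
        _ = ‖h‖ := mul_one _
    obtain ⟨C, hC⟩ := banach_steinhaus
      (g := fun i : ι => inclusionInDoubleDual ℂ Y (T i.1)) (fun φ => hbdd φ)
    have hC' : ∀ i : ι, ‖T i.1‖ ≤ C := by
      intro i
      have h1 : ‖inclusionInDoubleDual ℂ Y (T i.1)‖ = ‖T i.1‖ :=
        (inclusionInDoubleDualLi ℂ (E := Y)).norm_map (T i.1)
      have := hC i
      rwa [h1] at this
    have hC0 : 0 ≤ C := le_trans (norm_nonneg _) (hC' ⟨0, by simp⟩)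
    refine ⟨C + 1, by positivity, fun ξ => ?_⟩
    rcases eq_or_ne (S ξ) 0 with h0 | h0
    · -- ‖T ξ‖ = 0
      have : ∀ t : ℝ, 0 < t → t * ‖T ξ‖ ≤ C := by
        intro t ht
        have hmem : ‖S ((t : ℂ) • ξ)‖ ≤ 1 := by simp [h0]
        have := hC' ⟨(t : ℂ) • ξ, hmem⟩
        simpa [norm_smul, abs_of_pos ht] using this
      have hT0 : ‖T ξ‖ = 0 := by
        by_contra hne
        have hpos : 0 < ‖T ξ‖ := lt_of_le_of_ne (norm_nonneg _) (Ne.symm hne)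
        have h1 : 0 < (C + 1) / ‖T ξ‖ := by
          have hCpos : (0:ℝ) < C + 1 := by linarith
          positivity
        have := this _ h1
        rw [div_mul_cancel₀ _ (ne_of_gt hpos)] at this
        linarith
      simp [h0, hT0]
    · have hS : 0 < ‖S ξ‖ := norm_pos_iff.mpr h0
      set c : ℂ := ((‖S ξ‖⁻¹ : ℝ) : ℂ)
      have hmem : ‖S (c • ξ)‖ ≤ 1 := by
        simp [c, norm_smul, abs_of_pos (inv_pos.mpr hS), inv_mul_cancel₀ (ne_of_gt hS)]
      have := hC' ⟨c • ξ, hmem⟩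
      simp only [map_smul, norm_smul] at this
      have hc : ‖c‖ = ‖S ξ‖⁻¹ := by
        simp [c, abs_of_pos (inv_pos.mpr hS)]
      rw [hc] at this
      have : ‖T ξ‖ ≤ C * ‖S ξ‖ := by
        rw [inv_mul_le_iff₀ hS] at this
        linarith [this]
      nlinarith [norm_nonneg (S ξ)]
  · rintro ⟨κ, hκ, hbd⟩ g
    have hgnn : (0:ℝ) ≤ κ * ‖g‖ := by positivity
    -- g ∘ T kills ker S
    have hker : LinearMap.ker (S : X →ₗ[ℂ] Y) ≤
        LinearMap.ker ((g.comp T : X →L[ℂ] ℂ) : X →ₗ[ℂ] ℂ) := by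
      intro ξ hξ
      have hS0 : S ξ = 0 := hξ
      have : ‖T ξ‖ ≤ κ * ‖S ξ‖ := hbd ξ
      rw [hS0] at this
      simp only [norm_zero, mul_zero] at this
      have hT0 : T ξ = 0 := norm_le_zero_iff.mp this
      simp [LinearMap.mem_ker, hT0]
    set e := LinearMap.quotKerEquivRange (S : X →ₗ[ℂ] Y)
    set f₁ := (LinearMap.ker (S : X →ₗ[ℂ] Y)).liftQ
      ((g.comp T : X →L[ℂ] ℂ) : X →ₗ[ℂ] ℂ) hker
    set f₀ : LinearMap.range (S : X →ₗ[ℂ] Y) →ₗ[ℂ] ℂ := f₁ ∘ₗ e.symm.toLinearMap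
    have key : ∀ ξ : X, f₀ ⟨S ξ, LinearMap.mem_range_self _ ξ⟩ = g (T ξ) := by
      intro ξ
      have h2 : e.symm ⟨S ξ, LinearMap.mem_range_self _ ξ⟩ = Submodule.Quotient.mk ξ :=
        LinearMap.quotKerEquivRange_symm_apply_image (S : X →ₗ[ℂ] Y) ξ _
      simp only [f₀, LinearMap.comp_apply, LinearEquiv.coe_toLinearMap, h2, f₁]
      simp [Submodule.liftQ_apply]
    have hbound : ∀ y : LinearMap.range (S : X →ₗ[ℂ] Y), ‖f₀ y‖ ≤ (κ * ‖g‖) * ‖y‖ := by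
      rintro ⟨y, ξ, rfl⟩
      show ‖f₀ ⟨S ξ, LinearMap.mem_range_self _ ξ⟩‖ ≤ κ * ‖g‖ * ‖S ξ‖
      rw [key ξ]
      calc ‖g (T ξ)‖ ≤ ‖g‖ * ‖T ξ‖ := g.le_opNorm _
        _ ≤ ‖g‖ * (κ * ‖S ξ‖) := by gcongr; exact hbd ξ
        _ = (κ * ‖g‖) * ‖S ξ‖ := by ring
        _ = (κ * ‖g‖) * ‖(⟨S ξ, LinearMap.mem_range_self _ ξ⟩ :
              LinearMap.range (S : X →ₗ[ℂ] Y))‖ := rfl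
    set f : LinearMap.range (S : X →ₗ[ℂ] Y) →L[ℂ] ℂ := f₀.mkContinuous (κ * ‖g‖) hbound
    obtain ⟨h, hext, _⟩ := exists_extension_norm_eq
      (LinearMap.range (S : X →ₗ[ℂ] Y)) f
    refine ⟨h, ?_⟩
    ext ξ
    have := hext ⟨S ξ, LinearMap.mem_range_self _ ξ⟩
    simp only [ContinuousLinearMap.comp_apply]
    rw [show h (S ξ) = h ((⟨S ξ, LinearMap.mem_range_self _ ξ⟩ :
      LinearMap.range (S : X →ₗ[ℂ] Y)) : Y) from rfl, this]
    exact (key ξ).symm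
end

section
/- Let X, Y be Banach spaces and S, T : X → Y bounded linear operators with ‖Tx‖ ≤ ‖Sx‖ for all x ∈ X. Then the second adjoints satisfy ‖T**v‖ ≤ ‖S**v‖ for all v ∈ X**. -/
/-- Key factorization lemma: if `‖Tx‖ ≤ ‖Sx‖` for all `x`, then every functional
`g ∘ T` factors as `f ∘ S` with `‖f‖ ≤ ‖g‖`, via Hahn–Banach. -/
theorem stmt_10_aux {X Y : Type*}
    [NormedAddCommGroup X] [NormedSpace ℂ X]
    [NormedAddCommGroup Y] [NormedSpace ℂ Y]
    (S T : X →L[ℂ] Y) (h : ∀ x : X, ‖T x‖ ≤ ‖S x‖) (g : Y →L[ℂ] ℂ) :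
    ∃ f : Y →L[ℂ] ℂ, ‖f‖ ≤ ‖g‖ ∧ f.comp S = g.comp T := by
  set Sl : X →ₗ[ℂ] Y := (S : X →ₗ[ℂ] Y) with hSl
  have hker : LinearMap.ker Sl ≤ LinearMap.ker ((g.comp T : X →L[ℂ] ℂ) : X →ₗ[ℂ] ℂ) := by
    intro x hx
    simp only [LinearMap.mem_ker, ContinuousLinearMap.coe_coe,
      ContinuousLinearMap.comp_apply] at *
    have hx' : S x = 0 := hx
    have : ‖T x‖ ≤ ‖S x‖ := h x
    rw [hx', norm_zero] at this
    have : T x = 0 := norm_le_zero_iff.mp this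
    rw [this, map_zero]
  let ψ₀ : (X ⧸ LinearMap.ker Sl) →ₗ[ℂ] ℂ :=
    Submodule.liftQ _ ((g.comp T : X →L[ℂ] ℂ) : X →ₗ[ℂ] ℂ) hker
  let e := LinearMap.quotKerEquivRange Sl
  let ψ : (LinearMap.range Sl) →ₗ[ℂ] ℂ := ψ₀ ∘ₗ (e.symm : LinearMap.range Sl →ₗ[ℂ] _)
  have hψS : ∀ x : X, ψ ⟨S x, ⟨x, rfl⟩⟩ = g (T x) := by
    intro x
    have he : e (Submodule.Quotient.mk x) = ⟨S x, ⟨x, rfl⟩⟩ := rfl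
    have hsymm : e.symm ⟨S x, ⟨x, rfl⟩⟩ = Submodule.Quotient.mk x := by
      rw [← he, LinearEquiv.symm_apply_apply]
    show ψ₀ (e.symm ⟨S x, ⟨x, rfl⟩⟩) = g (T x)
    rw [hsymm]
    rfl
  have hψ : ∀ p : LinearMap.range Sl, ‖ψ p‖ ≤ ‖g‖ * ‖p‖ := by
    rintro ⟨y, x, rfl⟩
    have : (⟨Sl x, ⟨x, rfl⟩⟩ : LinearMap.range Sl) = ⟨S x, ⟨x, rfl⟩⟩ := rfl
    rw [this, hψS x]
    calc ‖g (T x)‖ ≤ ‖g‖ * ‖T x‖ := g.le_opNorm _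
      _ ≤ ‖g‖ * ‖S x‖ := by
          exact mul_le_mul_of_nonneg_left (h x) (norm_nonneg g)
      _ = ‖g‖ * ‖(⟨S x, ⟨x, rfl⟩⟩ : LinearMap.range Sl)‖ := rfl
  let ψc : (LinearMap.range Sl) →L[ℂ] ℂ := ψ.mkContinuous ‖g‖ hψ
  obtain ⟨f, hf1, hf2⟩ := exists_extension_norm_eq (LinearMap.range Sl) ψc
  refine ⟨f, ?_, ?_⟩
  · rw [hf2]
    exact ψ.mkContinuous_norm_le (norm_nonneg g) hψ
  · ext x
    have : f (S x) = ψc ⟨S x, ⟨x, rfl⟩⟩ := hf1 ⟨S x, ⟨x, rfl⟩⟩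
    simp only [ContinuousLinearMap.comp_apply]
    rw [this]
    exact hψS x

/-- If `‖Tx‖ ≤ `‖Sx‖` for all `x`, then the second adjoints satisfy
`‖T**v‖ ≤ ‖S**v‖` for all `v ∈ X**`.  Here the dual map of `T` is
`g ↦ g ∘ T`, implemented via `compL`, and `T** v = v ∘ T*`. -/
theorem stmt_10 {X Y : Type*}
    [NormedAddCommGroup X] [NormedSpace ℂ X] [CompleteSpace X]
    [NormedAddCommGroup Y] [NormedSpace ℂ Y] [CompleteSpace Y]
    (S T : X →L[ℂ] Y)
    (h : ∀ x : X, ‖T x‖ ≤ ‖S x‖) :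
    ∀ v : (X →L[ℂ] ℂ) →L[ℂ] ℂ,
      ‖v.comp ((ContinuousLinearMap.compL ℂ X Y ℂ).flip T)‖
        ≤ ‖v.comp ((ContinuousLinearMap.compL ℂ X Y ℂ).flip S)‖ := by
  intro v
  apply ContinuousLinearMap.opNorm_le_bound _ (norm_nonneg _)
  intro g
  obtain ⟨f, hf_norm, hf_eq⟩ := stmt_10_aux S T h g
  have key : (v.comp ((ContinuousLinearMap.compL ℂ X Y ℂ).flip T)) g
      = (v.comp ((ContinuousLinearMap.compL ℂ X Y ℂ).flip S)) f := by
    simp only [ContinuousLinearMap.comp_apply, ContinuousLinearMap.flip_apply,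
      ContinuousLinearMap.compL_apply]
    rw [← hf_eq]
  rw [key]
  calc ‖(v.comp ((ContinuousLinearMap.compL ℂ X Y ℂ).flip S)) f‖
      ≤ ‖v.comp ((ContinuousLinearMap.compL ℂ X Y ℂ).flip S)‖ * ‖f‖ :=
        ContinuousLinearMap.le_opNorm _ _
    _ ≤ ‖v.comp ((ContinuousLinearMap.compL ℂ X Y ℂ).flip S)‖ * ‖g‖ :=
        mul_le_mul_of_nonneg_left hf_norm (norm_nonneg _)
end

section
/- Let a be a hyponormal operator on a complex Hilbert space H, let λ₁ ≠ λ₂ be distinct approximate eigenvalues of a, and let (ξ₁ₙ), (ξ₂ₙ) be sequences of unit vectors with ‖(a − λᵢ)ξᵢₙ‖ → 0 for i = 1, 2. Then ⟨ξ₁ₙ, ξ₂ₙ⟩ → 0 as n → ∞. -/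
open scoped InnerProductSpace
open Filter Topology

lemma hypo_shift {H : Type*} [NormedAddCommGroup H] [InnerProductSpace ℂ H]
    [CompleteSpace H] (a : H →L[ℂ] H)
    (hyp : ∀ ξ : H, ‖(ContinuousLinearMap.adjoint a) ξ‖ ≤ ‖a ξ‖)
    (l : ℂ) (ξ : H) :
    ‖(ContinuousLinearMap.adjoint a) ξ - (starRingEnd ℂ l) • ξ‖ ≤ ‖a ξ - l • ξ‖ := by
  have hsq : ‖(ContinuousLinearMap.adjoint a) ξ - (starRingEnd ℂ l) • ξ‖ ^ 2
      ≤ ‖a ξ - l • ξ‖ ^ 2 := by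
    rw [@norm_sub_sq ℂ, @norm_sub_sq ℂ]
    have hre : RCLike.re ⟪(ContinuousLinearMap.adjoint a) ξ, (starRingEnd ℂ l) • ξ⟫_ℂ
        = RCLike.re ⟪a ξ, l • ξ⟫_ℂ := by
      rw [inner_smul_right, inner_smul_right,
        ContinuousLinearMap.adjoint_inner_left, ← inner_conj_symm (a ξ) ξ]
      have : l * (starRingEnd ℂ) ⟪ξ, a ξ⟫_ℂ
          = (starRingEnd ℂ) ((starRingEnd ℂ) l * ⟪ξ, a ξ⟫_ℂ) := by
        rw [map_mul]; simp
      rw [this, RCLike.conj_re]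
    rw [hre, norm_smul, norm_smul]
    have := hyp ξ
    simp only [RCLike.norm_conj]
    nlinarith [norm_nonneg ((ContinuousLinearMap.adjoint a) ξ), norm_nonneg (a ξ),
      norm_nonneg ξ, norm_nonneg l]
  nlinarith [norm_nonneg ((ContinuousLinearMap.adjoint a) ξ - (starRingEnd ℂ l) • ξ),
    norm_nonneg (a ξ - l • ξ), hsq]

/-- For a hyponormal `a` and distinct approximate eigenvalues `λ₁ ≠ λ₂`
with approximating unit-vector sequences, the inner products
`⟨ξ₁ₙ, ξ₂ₙ⟩` tend to `0`. -/
theorem stmt_15 {H : Type*} [NormedAddCommGroup H] [InnerProductSpace ℂ H]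
    [CompleteSpace H] (a : H →L[ℂ] H)
    (hyp : ∀ ξ : H, ‖(ContinuousLinearMap.adjoint a) ξ‖ ≤ ‖a ξ‖)
    (l₁ l₂ : ℂ) (hne : l₁ ≠ l₂) (ξ₁ ξ₂ : ℕ → H)
    (h₁u : ∀ n, ‖ξ₁ n‖ = 1) (h₂u : ∀ n, ‖ξ₂ n‖ = 1)
    (h₁ : Tendsto (fun n => ‖a (ξ₁ n) - l₁ • ξ₁ n‖) atTop (𝓝 0))
    (h₂ : Tendsto (fun n => ‖a (ξ₂ n) - l₂ • ξ₂ n‖) atTop (𝓝 0)) :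
    Tendsto (fun n => (⟪ξ₁ n, ξ₂ n⟫_ℂ)) atTop (𝓝 0) := by
  have hc : (0:ℝ) < ‖l₁ - l₂‖ := by
    simpa [sub_eq_zero] using hne
  have hb : ∀ n, ‖⟪ξ₁ n, ξ₂ n⟫_ℂ‖
      ≤ (‖a (ξ₁ n) - l₁ • ξ₁ n‖ + ‖a (ξ₂ n) - l₂ • ξ₂ n‖) / ‖l₁ - l₂‖ := by
    intro n
    rw [div_eq_inv_mul, ← mul_le_mul_iff_right₀ hc, ← mul_assoc, mul_inv_cancel₀ hc.ne',
      one_mul, ← norm_mul]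
    have key : (l₁ - l₂) * ⟪ξ₁ n, ξ₂ n⟫_ℂ
        = ⟪(starRingEnd ℂ l₁) • ξ₁ n - (ContinuousLinearMap.adjoint a) (ξ₁ n), ξ₂ n⟫_ℂ
          + ⟪ξ₁ n, a (ξ₂ n) - l₂ • ξ₂ n⟫_ℂ := by
      rw [inner_sub_left, inner_sub_right, inner_smul_left, inner_smul_right,
        ContinuousLinearMap.adjoint_inner_left]
      simp only [RingHomCompTriple.comp_apply, RingHom.id_apply, Complex.conj_conj,
        starRingEnd_self_apply, star_star]
      ring_nf
    rw [key]
    calc ‖⟪(starRingEnd ℂ l₁) • ξ₁ n - (ContinuousLinearMap.adjoint a) (ξ₁ n), ξ₂ n⟫_ℂ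
          + ⟪ξ₁ n, a (ξ₂ n) - l₂ • ξ₂ n⟫_ℂ‖
        ≤ ‖⟪(starRingEnd ℂ l₁) • ξ₁ n - (ContinuousLinearMap.adjoint a) (ξ₁ n), ξ₂ n⟫_ℂ‖
          + ‖⟪ξ₁ n, a (ξ₂ n) - l₂ • ξ₂ n⟫_ℂ‖ := norm_add_le _ _
      _ ≤ ‖(starRingEnd ℂ l₁) • ξ₁ n - (ContinuousLinearMap.adjoint a) (ξ₁ n)‖ * ‖ξ₂ n‖
          + ‖ξ₁ n‖ * ‖a (ξ₂ n) - l₂ • ξ₂ n‖ :=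
          add_le_add (norm_inner_le_norm _ _) (norm_inner_le_norm _ _)
      _ ≤ ‖a (ξ₁ n) - l₁ • ξ₁ n‖ + ‖a (ξ₂ n) - l₂ • ξ₂ n‖ := by
          rw [h₁u, h₂u, mul_one, one_mul]
          have := hypo_shift a hyp l₁ (ξ₁ n)
          rw [norm_sub_rev] at this
          linarith
  have hg : Tendsto (fun n => (‖a (ξ₁ n) - l₁ • ξ₁ n‖ + ‖a (ξ₂ n) - l₂ • ξ₂ n‖) / ‖l₁ - l₂‖)
      atTop (𝓝 0) := by
    have := (h₁.add h₂).div_const ‖l₁ - l₂‖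
    simpa using this
  exact squeeze_zero_norm hb hg
end

section
/- Let f be a Lipschitz function with constant κ on the spectrum σ(a) of a normal operator a ∈ B(H). Then for every state ω on B(H), D_ω(f(a)) ≤ κ² D_ω(a), where D_ω(x) = ω(x*x) − |ω(x)|². -/
/-- If `f` is `κ`-Lipschitz on the spectrum of a normal operator `a`, then
for every state `ω` on `B(H)`, `D_ω(f(a)) ≤ κ² D_ω(a)`, where
`D_ω(x) = ω(x*x) − |ω(x)|²`. -/
theorem stmt_17 {H : Type*} [NormedAddCommGroup H] [InnerProductSpace ℂ H]
    [CompleteSpace H] (a : H →L[ℂ] H) [IsStarNormal a]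
    (f : ℂ → ℂ) (κ : ℝ) (hκ : 0 < κ)
    (hf : ∀ lam ∈ spectrum ℂ a, ∀ mu ∈ spectrum ℂ a,
      ‖f mu - f lam‖ ≤ κ * ‖mu - lam‖)
    (ω : (H →L[ℂ] H) →ₗ[ℂ] ℂ)
    (hω1 : ω 1 = 1)
    (hωpos : ∀ x : H →L[ℂ] H, ∃ r : ℝ, 0 ≤ r ∧ ω (star x * x) = (r : ℂ)) :
    (ω (star (cfc f a) * cfc f a)).re - ‖ω (cfc f a)‖ ^ 2
      ≤ κ ^ 2 * ((ω (star a * a)).re - ‖ω a‖ ^ 2) := by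
  -- `f` is continuous on the spectrum
  have hfc : ContinuousOn f (spectrum ℂ a) := by
    have hL : LipschitzOnWith (Real.toNNReal κ) f (spectrum ℂ a) := by
      rw [lipschitzOnWith_iff_dist_le_mul]
      intro x hx y hy
      have h := hf y hy x hx
      simpa [dist_eq_norm, Real.coe_toNNReal κ hκ.le] using h
    exact hL.continuousOn
  have hfs : ContinuousOn (fun x => star (f x)) (spectrum ℂ a) := hfc.star
  -- conj-times-self identity in ℂ
  have hcs : ∀ z : ℂ, (starRingEnd ℂ) z * z = ((‖z‖ ^ 2 : ℝ) : ℂ) := by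
    intro z
    rw [mul_comm, Complex.mul_conj]
    norm_cast
    rw [Complex.normSq_eq_norm_sq]
  -- positivity of ω on cfc of pointwise-nonnegative functions
  have hpos : ∀ p : ℂ → ℂ, ContinuousOn p (spectrum ℂ a) →
      (∀ x ∈ spectrum ℂ a, ∃ r : ℝ, 0 ≤ r ∧ p x = (r : ℂ)) →
      ∃ r : ℝ, 0 ≤ r ∧ ω (cfc p a) = (r : ℂ) := by
    intro p hp hpr
    set b := cfc (fun z => ((Real.sqrt (p z).re : ℝ) : ℂ)) a with hb
    have hcont : ContinuousOn (fun z => ((Real.sqrt (p z).re : ℝ) : ℂ)) (spectrum ℂ a) := by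
      fun_prop
    have hsb : star b * b = cfc p a := by
      rw [hb, ← cfc_star, ← cfc_mul _ _ _ hcont.star hcont]
      apply cfc_congr
      intro x hx
      obtain ⟨r, hr0, hr⟩ := hpr x hx
      simp only [hr, Complex.ofReal_re, RCLike.star_def, Complex.conj_ofReal,
        ← Complex.ofReal_mul, Real.mul_self_sqrt hr0]
    obtain ⟨r, hr0, hr⟩ := hωpos b
    exact ⟨r, hr0, by rw [← hsb, hr]⟩
  -- ω is star-preserving
  have hstar : ∀ x : H →L[ℂ] H, ω (star x) = (starRingEnd ℂ) (ω x) := by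
    intro x
    obtain ⟨r0, _, h0⟩ := hωpos x
    have key : ∀ c : ℂ, ω (star (x + c • 1) * (x + c • 1))
        = (r0 : ℂ) + c * ω (star x) + (starRingEnd ℂ) c * ω x + c * (starRingEnd ℂ) c := by
      intro c
      have hexp : star (x + c • 1) * (x + c • 1)
          = star x * x + c • star x + ((starRingEnd ℂ) c) • x
            + (c * (starRingEnd ℂ) c) • (1 : H →L[ℂ] H) := by
        simp only [star_add, star_smul, star_one, add_mul, mul_add, smul_mul_assoc,
          mul_smul_comm, one_mul, mul_one, smul_smul, smul_add, Complex.star_def]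
        abel
      rw [hexp]
      simp only [map_add, map_smul, h0, hω1, smul_eq_mul, mul_one]
    obtain ⟨r1, _, h1⟩ := hωpos (x + (1 : ℂ) • 1)
    obtain ⟨r2, _, h2⟩ := hωpos (x + Complex.I • 1)
    have e1 := (key 1).symm.trans h1
    have e2 := (key Complex.I).symm.trans h2
    simp only [map_one, one_mul, mul_one, Complex.conj_I] at e1 e2
    rw [Complex.ext_iff] at e1 e2 ⊢
    simp only [Complex.add_re, Complex.add_im, Complex.mul_re, Complex.mul_im,
      Complex.I_re, Complex.I_im, Complex.ofReal_re, Complex.ofReal_im, Complex.one_re,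
      Complex.one_im, Complex.conj_re, Complex.conj_im, Complex.neg_re, Complex.neg_im] at e1 e2 ⊢
    constructor <;> [linarith [e2.2]; linarith [e1.2]]
  -- expansion of ω ∘ cfc on "quadratic" functions of g
  have master : ∀ g : ℂ → ℂ, ContinuousOn g (spectrum ℂ a) → ∀ c0 c1 c2 c3 : ℂ,
      cfc (fun x => c0 + c1 * g x + c2 * star (g x) + c3 * (star (g x) * g x)) a
        = c0 • (1 : H →L[ℂ] H) + c1 • cfc g a + c2 • star (cfc g a)
          + c3 • (star (cfc g a) * cfc g a) := by
    intro g hg c0 c1 c2 c3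
    have hgs : ContinuousOn (fun x => star (g x)) (spectrum ℂ a) := hg.star
    rw [cfc_add a _ _ (by fun_prop) (by fun_prop),
        cfc_add a _ _ (by fun_prop) (by fun_prop),
        cfc_add a _ _ (by fun_prop) (by fun_prop),
        cfc_const_mul _ _ _ hg, cfc_const_mul _ _ _ hgs,
        cfc_const_mul _ (fun x => star (g x) * g x) _ (hgs.mul hg), cfc_mul _ _ _ hgs hg,
        cfc_star, cfc_const c0 a, Algebra.algebraMap_eq_smul_one]
  have om : ∀ g : ℂ → ℂ, ContinuousOn g (spectrum ℂ a) → ∀ c0 c1 c2 c3 : ℂ,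
      ω (cfc (fun x => c0 + c1 * g x + c2 * star (g x) + c3 * (star (g x) * g x)) a)
        = c0 + c1 * ω (cfc g a) + c2 * ω (star (cfc g a))
          + c3 * ω (star (cfc g a) * cfc g a) := by
    intro g hg c0 c1 c2 c3
    rw [master g hg c0 c1 c2 c3]
    simp only [map_add, map_smul, smul_eq_mul, hω1, mul_one]
  have om_id : ∀ c0 c1 c2 c3 : ℂ,
      ω (cfc (fun x : ℂ => c0 + c1 * x + c2 * star x + c3 * (star x * x)) a)
        = c0 + c1 * ω a + c2 * ω (star a) + c3 * ω (star a * a) := by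
    intro c0 c1 c2 c3
    simpa [cfc_id' ℂ a] using om (fun x => x) continuousOn_id c0 c1 c2 c3
  have om_f : ∀ c0 c1 c2 c3 : ℂ,
      ω (cfc (fun x => c0 + c1 * f x + c2 * star (f x) + c3 * (star (f x) * f x)) a)
        = c0 + c1 * ω (cfc f a) + c2 * ω (star (cfc f a))
          + c3 * ω (star (cfc f a) * cfc f a) := om f hfc
  -- notation
  set F := cfc f a with hF
  set va := ω a with hva
  set va' := ω (star a) with hva'
  set vF := ω F with hvF
  set vF' := ω (star F) with hvF'
  set S := ω (star a * a) with hS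
  set T := ω (star F * F) with hT
  -- the outer function
  set g : ℂ → ℂ := fun μ =>
      (((κ : ℂ) ^ 2 * S - T) + (-(κ : ℂ) ^ 2 * va') * μ + (-(κ : ℂ) ^ 2 * va) * star μ
        + (κ : ℂ) ^ 2 * (star μ * μ))
      + ((0 : ℂ) + vF' * f μ + vF * star (f μ) + (-1 : ℂ) * (star (f μ) * f μ)) with hg
  -- inner positivity: g is pointwise nonnegative (real) on the spectrum
  have inner : ∀ μ ∈ spectrum ℂ a, ∃ r : ℝ, 0 ≤ r ∧ g μ = (r : ℂ) := by
    intro μ hμ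
    have hGpt : ∀ lam ∈ spectrum ℂ a, ∃ r : ℝ, 0 ≤ r ∧
        (((κ : ℂ) ^ 2 * (star μ * μ) + (-(κ : ℂ) ^ 2 * star μ) * lam
          + (-(κ : ℂ) ^ 2 * μ) * star lam + (κ : ℂ) ^ 2 * (star lam * lam))
        + (-(star (f μ) * f μ) + star (f μ) * f lam + f μ * star (f lam)
          + (-1 : ℂ) * (star (f lam) * f lam))) = (r : ℂ) := by
      intro lam hlam
      refine ⟨κ ^ 2 * ‖lam - μ‖ ^ 2 - ‖f lam - f μ‖ ^ 2, ?_, ?_⟩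
      · have h := hf μ hμ lam hlam
        nlinarith [norm_nonneg (lam - μ), norm_nonneg (f lam - f μ), hκ.le]
      · have e : (((κ : ℂ) ^ 2 * (star μ * μ) + (-(κ : ℂ) ^ 2 * star μ) * lam
            + (-(κ : ℂ) ^ 2 * μ) * star lam + (κ : ℂ) ^ 2 * (star lam * lam))
          + (-(star (f μ) * f μ) + star (f μ) * f lam + f μ * star (f lam)
            + (-1 : ℂ) * (star (f lam) * f lam)))
            = (κ : ℂ) ^ 2 * ((starRingEnd ℂ) (lam - μ) * (lam - μ))
              - (starRingEnd ℂ) (f lam - f μ) * (f lam - f μ) := by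
          simp only [map_sub, RCLike.star_def]
          ring
        rw [e, hcs, hcs]
        push_cast
        ring
    have hcontin : ContinuousOn (fun lam =>
        (((κ : ℂ) ^ 2 * (star μ * μ) + (-(κ : ℂ) ^ 2 * star μ) * lam
          + (-(κ : ℂ) ^ 2 * μ) * star lam + (κ : ℂ) ^ 2 * (star lam * lam))
        + (-(star (f μ) * f μ) + star (f μ) * f lam + f μ * star (f lam)
          + (-1 : ℂ) * (star (f lam) * f lam)))) (spectrum ℂ a) := by fun_prop
    obtain ⟨r, hr0, hr⟩ := hpos _ hcontin hGpt
    refine ⟨r, hr0, ?_⟩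
    rw [← hr, cfc_add a
      (fun lam => (κ : ℂ) ^ 2 * (star μ * μ) + (-(κ : ℂ) ^ 2 * star μ) * lam
          + (-(κ : ℂ) ^ 2 * μ) * star lam + (κ : ℂ) ^ 2 * (star lam * lam))
      (fun lam => -(star (f μ) * f μ) + star (f μ) * f lam + f μ * star (f lam)
          + (-1 : ℂ) * (star (f lam) * f lam)) (by fun_prop) (by fun_prop),
      map_add, om_id _ _ _ _, om_f _ _ _ _, hg]
    ring
  -- outer positivity
  have hgcont : ContinuousOn g (spectrum ℂ a) := by rw [hg]; fun_prop
  obtain ⟨r, hr0, hr⟩ := hpos g hgcont inner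
  have hexp : ω (cfc g a) = 2 * (κ : ℂ) ^ 2 * (S - va * va') - 2 * (T - vF * vF') := by
    rw [hg, cfc_add a
      (fun μ => ((κ : ℂ) ^ 2 * S - T) + (-(κ : ℂ) ^ 2 * va') * μ + (-(κ : ℂ) ^ 2 * va) * star μ
        + (κ : ℂ) ^ 2 * (star μ * μ))
      (fun μ => (0 : ℂ) + vF' * f μ + vF * star (f μ) + (-1 : ℂ) * (star (f μ) * f μ))
      (by fun_prop) (by fun_prop),
      map_add, om_id _ _ _ _, om_f _ _ _ _]
    ring
  have hva'c : va' = (starRingEnd ℂ) va := by rw [hva', hva]; exact hstar a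
  have hvF'c : vF' = (starRingEnd ℂ) vF := by rw [hvF', hvF]; exact hstar F
  have hva2 : va * va' = ((‖va‖ ^ 2 : ℝ) : ℂ) := by rw [hva'c, mul_comm, hcs]
  have hvF2 : vF * vF' = ((‖vF‖ ^ 2 : ℝ) : ℂ) := by rw [hvF'c, mul_comm, hcs]
  rw [hva2, hvF2] at hexp
  have hkey : ((2 * κ ^ 2 : ℝ) : ℂ) * (S - ((‖va‖ ^ 2 : ℝ) : ℂ))
      - ((2 : ℝ) : ℂ) * (T - ((‖vF‖ ^ 2 : ℝ) : ℂ)) = (r : ℂ) := by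
    rw [← hr, hexp]; push_cast; ring
  have hre := congrArg Complex.re hkey
  simp only [Complex.sub_re, Complex.re_ofReal_mul, Complex.ofReal_re] at hre
  linarith
end

section
/- Let a be a diagonal operator on a Hilbert space H with orthonormal basis (e_i) and a·e_i = λ_i e_i, and let f : {λ_i} → ℂ be a function. Let b be the diagonal operator with b·e_i = f(λ_i)e_i. If the divided-difference matrix Λ with entries Λ_{ij} = (f(λ_i) − f(λ_j))/(λ_i − λ_j) for λ_i ≠ λ_j and 0 otherwise is a Schur multiplier on B(H) with norm κ, then ‖[b, x]‖ ≤ κ‖[a, x]‖ for all x ∈ B(H). -/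
open scoped InnerProductSpace

section Aux

variable {H : Type*} [NormedAddCommGroup H] [InnerProductSpace ℂ H]
  [CompleteSpace H] (e : HilbertBasis ℕ ℂ H)

lemma aux_ext_vec {v w : H} (h : ∀ i, ⟪e i, v⟫_ℂ = ⟪e i, w⟫_ℂ) : v = w := by
  have : e.repr v = e.repr w := by
    ext i
    simpa [e.repr_apply_apply] using h i
  exact e.repr.injective this

lemma aux_diag_inner (a : H →L[ℂ] H) (lam : ℕ → ℂ)
    (ha : ∀ i, a (e i) = lam i • e i) (i : ℕ) (w : H) :
    ⟪e i, a w⟫_ℂ = lam i * ⟪e i, w⟫_ℂ := by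
  have hd : Dense (Submodule.span ℂ (Set.range e) : Set H) := by
    rw [Submodule.dense_iff_topologicalClosure_eq_top, e.dense_span]
  have := ContinuousLinearMap.ext_on (f := (innerSL ℂ (e i)).comp a)
      (g := lam i • innerSL ℂ (e i)) hd ?_
  · simpa using congrFun (congrArg DFunLike.coe this) w
  · rintro _ ⟨k, rfl⟩
    simp only [ContinuousLinearMap.comp_apply, innerSL_apply_apply,
      ContinuousLinearMap.smul_apply, smul_eq_mul, ha k, inner_smul_right]
    rcases eq_or_ne i k with rfl | h
    · ring
    · rw [e.orthonormal.2 h]; ring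

end Aux

/-- If `a, b` are diagonal operators w.r.t. an orthonormal basis `(e i)`, with
`a e_i = λ_i e_i`, `b e_i = f(λ_i) e_i`, and the divided-difference matrix
`Λ_{ij} = (f(λ_i) − f(λ_j))/(λ_i − λ_j)` (with `0` on coincidences) is a Schur
multiplier on `B(H)` with norm `κ`, then `‖[b, x]‖ ≤ κ‖[a, x]‖` for all `x`. -/
theorem stmt_18 {H : Type*} [NormedAddCommGroup H] [InnerProductSpace ℂ H]
    [CompleteSpace H] (e : HilbertBasis ℕ ℂ H)
    (lam : ℕ → ℂ) (f : ℂ → ℂ) (a b : H →L[ℂ] H)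
    (ha : ∀ i, a (e i) = lam i • e i)
    (hb : ∀ i, b (e i) = f (lam i) • e i)
    (κ : ℝ)
    (hSchur : ∀ x : H →L[ℂ] H, ∃ y : H →L[ℂ] H,
      (∀ i j, (⟪e i, y (e j)⟫_ℂ)
        = (if lam i = lam j then 0 else (f (lam i) - f (lam j)) / (lam i - lam j))
            * (⟪e i, x (e j)⟫_ℂ)) ∧ ‖y‖ ≤ κ * ‖x‖) :
    ∀ x : H →L[ℂ] H, ‖b * x - x * b‖ ≤ κ * ‖a * x - x * a‖ := by
  intro x
  obtain ⟨y, hy, hyn⟩ := hSchur (a * x - x * a)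
  have hentry : ∀ i j, ⟪e i, (b * x - x * b) (e j)⟫_ℂ = ⟪e i, y (e j)⟫_ℂ := by
    intro i j
    have hax : ⟪e i, (a * x - x * a) (e j)⟫_ℂ = (lam i - lam j) * ⟪e i, x (e j)⟫_ℂ := by
      simp only [ContinuousLinearMap.sub_apply, ContinuousLinearMap.mul_apply, inner_sub_right,
        ha j, map_smul, inner_smul_right, aux_diag_inner e a lam ha i (x (e j))]
      ring
    have hbx : ⟪e i, (b * x - x * b) (e j)⟫_ℂ
        = (f (lam i) - f (lam j)) * ⟪e i, x (e j)⟫_ℂ := by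
      simp only [ContinuousLinearMap.sub_apply, ContinuousLinearMap.mul_apply, inner_sub_right,
        hb j, map_smul, inner_smul_right, aux_diag_inner e b (fun i => f (lam i)) hb i (x (e j))]
      ring
    rw [hbx, hy i j, hax]
    split_ifs with h
    · rw [h]; ring
    · have hne : lam i - lam j ≠ 0 := sub_ne_zero.mpr fun hh => h (by linear_combination hh)
      field_simp
  have : b * x - x * b = y := by
    have hd : Dense (Submodule.span ℂ (Set.range e) : Set H) := by
      rw [Submodule.dense_iff_topologicalClosure_eq_top, e.dense_span]
    refine ContinuousLinearMap.ext_on hd ?_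
    rintro _ ⟨j, rfl⟩
    exact aux_ext_vec e fun i => hentry i j
  rw [this]
  exact hyn
end
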